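/- For each n ≥ 0, let T(q,n) = ∑_{λ ⊢ n} 2^{r(λ)} binom(q; E(λ)) where the sum is over partitions λ of n, r(λ) is the number of parts, and binom(q; E(λ)) is the multinomial coefficient in the multiplicities of λ. Then T(q,n) = ∑_{i=1}^{n} 2^i binom(n−1, i−1) binom(q, i) as polynomials in q. -/

import Mathlib

open Polynomial Finset



lemma prod_fact_erase (s : Multiset ℕ) (a : ℕ) (ha : a ∈ s) :
    ∏ b ∈ s.toFinset, (s.count b).factorial
      = s.count a * ∏ b ∈ (s.erase a).toFinset, ((s.erase a).count b).factorial := by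
  have hsub : (s.erase a).toFinset ⊆ s.toFinset :=
    Multiset.toFinset_subset.mpr (Multiset.subset_of_le (Multiset.erase_le a s))
  have h1 : ∏ b ∈ (s.erase a).toFinset, ((s.erase a).count b).factorial
      = ∏ b ∈ s.toFinset, ((s.erase a).count b).factorial := by
    refine Finset.prod_subset hsub ?_
    intro b _ hb
    have : (s.erase a).count b = 0 := by
      rwa [Multiset.count_eq_zero, ← Multiset.mem_toFinset]
    simp [this]
  have haF : a ∈ s.toFinset := Multiset.mem_toFinset.mpr ha
  rw [h1, ← Finset.mul_prod_erase _ _ haF, ← Finset.mul_prod_erase _ _ haF]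
  have h2 : ∀ b ∈ s.toFinset.erase a, ((s.erase a).count b).factorial = (s.count b).factorial := by
    intro b hb
    rw [Multiset.count_erase_of_ne (Finset.ne_of_mem_erase hb) ]
  rw [Finset.prod_congr rfl h2, Multiset.count_erase_self, ← mul_assoc,
    Nat.mul_factorial_pred (Multiset.count_pos.mpr ha).ne']

/-- The tail of a composition, as a composition of `n - first block`. -/
def compTail {n : ℕ} (c : Composition n) : Composition (n - c.blocks.headI) where
  blocks := c.blocks.tail
  blocks_pos h := c.blocks_pos (List.mem_of_mem_tail h)
  blocks_sum := by
    have hs := c.blocks_sum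
    cases hb : c.blocks with
    | nil => rw [hb] at hs; simp [hb, ← hs]
    | cons x l => rw [hb] at hs; simp [hb, ← hs]

lemma fiber_card : ∀ (s : Multiset ℕ), (∀ a ∈ s, 0 < a) → ∀ n, s.sum = n →
    (Finset.univ.filter (fun c : Composition n => (↑c.blocks : Multiset ℕ) = s)).card
      * ∏ b ∈ s.toFinset, (s.count b).factorial = (Multiset.card s).factorial := by
  intro s
  induction s using Multiset.strongInductionOn with
  | ih s IH =>
  intro hpos n hsum
  rcases eq_or_ne s 0 with rfl | hne
  · have hn : n = 0 := by simpa using hsum.symm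
    subst hn
    have huniv : (Finset.univ.filter
        (fun c : Composition 0 => (↑c.blocks : Multiset ℕ) = 0)) = Finset.univ := by
      apply Finset.filter_true_of_mem
      intro c _
      have hs := c.blocks_sum
      cases hb : c.blocks with
      | nil => simp [hb]
      | cons x l =>
        exfalso
        have hx := c.blocks_pos (hb ▸ (List.mem_cons_self : x ∈ x :: l))
        rw [hb] at hs
        simp at hs
        omega
    rw [huniv]
    simp [Finset.card_univ, composition_card]
  · -- recurrence
    have hrec : (Finset.univ.filter
          (fun c : Composition n => (↑c.blocks : Multiset ℕ) = s)).card
        = ∑ a ∈ s.toFinset, (Finset.univ.filter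
            (fun c : Composition (n - a) => (↑c.blocks : Multiset ℕ) = s.erase a)).card := by
      rw [← Finset.card_sigma]
      refine Finset.card_bij
        (fun c _ => ⟨c.blocks.headI, compTail c⟩) ?_ ?_ ?_
      · -- maps to
        intro c hc
        simp only [Finset.mem_filter, Finset.mem_univ, true_and] at hc
        have hnil : c.blocks ≠ [] := by
          intro h; apply hne; rw [← hc, h]; rfl
        have hmem : c.blocks.headI ∈ s := by
          rw [← hc]
          exact_mod_cast List.head!_mem_self hnil
        simp only [Finset.mem_sigma, Finset.mem_filter, Finset.mem_univ, true_and,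
          Multiset.mem_toFinset]
        refine ⟨hmem, ?_⟩
        have hcons : c.blocks.headI :: c.blocks.tail = c.blocks := List.cons_head!_tail hnil
        show (↑(c.blocks.tail) : Multiset ℕ) = s.erase c.blocks.headI
        rw [← hc, ← hcons]
        simp [Multiset.erase_cons_head]
      · -- injective
        intro c1 h1 c2 h2 heq
        simp only [Finset.mem_filter, Finset.mem_univ, true_and] at h1 h2
        have hnil1 : c1.blocks ≠ [] := fun h => hne (by rw [← h1, h]; rfl)
        have hnil2 : c2.blocks ≠ [] := fun h => hne (by rw [← h2, h]; rfl)
        have hfst : c1.blocks.headI = c2.blocks.headI :=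
          congrArg (fun p : Σ a : ℕ, Composition (n - a) => p.1) heq
        have htail : c1.blocks.tail = c2.blocks.tail :=
          congrArg (fun p : Σ a : ℕ, Composition (n - a) => p.2.blocks) heq
        apply Composition.ext
        rw [← List.cons_head!_tail hnil1, ← List.cons_head!_tail hnil2]
        rw [show c1.blocks.head! = c1.blocks.headI from rfl,
          show c2.blocks.head! = c2.blocks.headI from rfl, hfst, htail]
      · -- surjective
        rintro ⟨a, c'⟩ hb
        simp only [Finset.mem_sigma, Finset.mem_filter, Finset.mem_univ, true_and,
          Multiset.mem_toFinset] at hb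
        obtain ⟨has, hc'⟩ := hb
        have hale : a ≤ n := by
          obtain ⟨t, rfl⟩ := Multiset.exists_cons_of_mem has
          rw [← hsum]; simp
        refine ⟨⟨a :: c'.blocks, ?_, ?_⟩, ?_, ?_⟩
        · intro i hi
          rcases List.mem_cons.mp hi with rfl | hi
          · exact hpos _ has
          · exact c'.blocks_pos hi
        · simp [c'.blocks_sum, Nat.add_sub_cancel' hale]
        · simp only [Finset.mem_filter, Finset.mem_univ, true_and]
          show ((a :: c'.blocks : List ℕ) : Multiset ℕ) = s
          rw [← Multiset.cons_coe, hc', Multiset.cons_erase has]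
        · simp only [Sigma.mk.inj_iff]
          constructor
          · simp
          · apply heq_of_eq
            apply Composition.ext
            rfl
    rw [hrec, Finset.sum_mul]
    have hcard : Multiset.card s ≠ 0 := by simpa using hne
    have step : ∀ a ∈ s.toFinset,
        (Finset.univ.filter (fun c : Composition (n - a) =>
            (↑c.blocks : Multiset ℕ) = s.erase a)).card
          * ∏ b ∈ s.toFinset, (s.count b).factorial
        = s.count a * (Multiset.card s - 1).factorial := by
      intro a ha
      have has : a ∈ s := Multiset.mem_toFinset.mp ha
      have hpos' : ∀ x ∈ s.erase a, 0 < x := fun x hx => hpos x (Multiset.mem_of_mem_erase hx)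
      have hsum' : (s.erase a).sum = n - a := by
        obtain ⟨t, rfl⟩ := Multiset.exists_cons_of_mem has
        rw [← hsum]
        simp
      have hIH := IH (s.erase a) (Multiset.erase_lt.mpr has) hpos' (n - a) hsum'
      rw [Multiset.card_erase_of_mem has] at hIH
      rw [prod_fact_erase s a has, ← mul_assoc, mul_comm _ (s.count a), mul_assoc, hIH]
      rfl
    rw [Finset.sum_congr rfl step, ← Finset.sum_mul, Multiset.toFinset_sum_count_eq]
    exact Nat.mul_factorial_pred hcard


lemma equiv_card_aux (n : ℕ) (hn : 1 ≤ n) (c : Composition n) :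
    ((compositionAsSetEquiv n) c.toCompositionAsSet).card + 1 = c.length := by
  set d := c.toCompositionAsSet with hd
  have hmem : ∀ i : Fin (n - 1), i ∈ (compositionAsSetEquiv n) d ↔
      (⟨1 + (i : ℕ), by omega⟩ : Fin n.succ) ∈ d.boundaries := by
    intro i
    simp [compositionAsSetEquiv]
  have hbij : ((compositionAsSetEquiv n) d).card
      = ((d.boundaries.erase 0).erase (Fin.last n)).card := by
    refine Finset.card_bij (fun i _ => (⟨1 + (i : ℕ), by omega⟩ : Fin n.succ)) ?_ ?_ ?_
    · intro i hi
      rw [hmem i] at hi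
      refine Finset.mem_erase.mpr ⟨?_, Finset.mem_erase.mpr ⟨?_, hi⟩⟩
      · have := i.2
        simp only [Ne, Fin.ext_iff, Fin.val_last]
        omega
      · simp only [Ne, Fin.ext_iff, Fin.val_zero]
        omega
    · intro i _ j _ hij
      have : 1 + (i : ℕ) = 1 + (j : ℕ) := by
        simpa [Fin.ext_iff] using hij
      exact Fin.ext (by omega)
    · intro j hj
      rw [Finset.mem_erase, Finset.mem_erase] at hj
      obtain ⟨hjl, hj0, hjb⟩ := hj
      have hjv0 : (j : ℕ) ≠ 0 := fun h => hj0 (Fin.ext (by simpa using h))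
      have hjvl : (j : ℕ) ≠ n := fun h => hjl (Fin.ext (by simpa using h))
      have hjlt : (j : ℕ) < n + 1 := j.2
      refine ⟨⟨(j : ℕ) - 1, by omega⟩, ?_, ?_⟩
      · rw [hmem]
        convert hjb using 2
        show 1 + ((j : ℕ) - 1) = (j : ℕ)
        omega
      · apply Fin.ext
        show 1 + ((j : ℕ) - 1) = (j : ℕ)
        omega
  have h0 : (0 : Fin (n + 1)) ∈ d.boundaries := d.zero_mem
  have hl : Fin.last n ∈ d.boundaries.erase 0 := by
    refine Finset.mem_erase.mpr ⟨?_, d.getLast_mem⟩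
    simp only [Ne, Fin.ext_iff, Fin.val_last, Fin.val_zero]
    omega
  have hcard : d.boundaries.card = c.length + 1 := by
    rw [d.card_boundaries_eq_succ_length, hd, Composition.toCompositionAsSet_length]
  have hlen : 1 ≤ c.length := Composition.length_pos_of_pos c hn
  rw [hbij, Finset.card_erase_of_mem hl, Finset.card_erase_of_mem h0, hcard]
  omega

lemma length_fiber_card (n i : ℕ) (hn : 1 ≤ n) (hi : 1 ≤ i) :
    (Finset.univ.filter (fun c : Composition n => c.length = i)).card
      = (n - 1).choose (i - 1) := by
  have hkey : (Finset.univ.filter (fun c : Composition n => c.length = i)).card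
      = (Finset.univ.filter (fun s : Finset (Fin (n - 1)) => s.card = i - 1)).card := by
    set E : Composition n ≃ Finset (Fin (n - 1)) :=
      (compositionEquiv n).trans (compositionAsSetEquiv n) with hE
    have hEc : ∀ c : Composition n, E c = (compositionAsSetEquiv n) c.toCompositionAsSet :=
      fun c => rfl
    refine Finset.card_bij (fun c _ => E c) ?_ ?_ ?_
    · intro c hc
      simp only [Finset.mem_filter, Finset.mem_univ, true_and] at hc ⊢
      have := equiv_card_aux n hn c
      rw [← hEc c] at this
      omega
    · intro c1 _ c2 _ heq
      exact E.injective heq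
    · intro s hs
      simp only [Finset.mem_filter, Finset.mem_univ, true_and] at hs
      refine ⟨E.symm s, ?_, E.apply_symm_apply s⟩
      simp only [Finset.mem_filter, Finset.mem_univ, true_and]
      have h2 := equiv_card_aux n hn (E.symm s)
      rw [← hEc, E.apply_symm_apply s] at h2
      omega
  rw [hkey]
  have hps : (Finset.univ.filter (fun s : Finset (Fin (n - 1)) => s.card = i - 1))
      = Finset.powersetCard (i - 1) Finset.univ := by
    rw [Finset.powersetCard_eq_filter, Finset.powerset_univ]
  rw [hps, Finset.card_powersetCard, Finset.card_univ, Fintype.card_fin]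

theorem partition_two_pow_multinomial_sum (n : ℕ) (hn : 1 ≤ n) :
    ∑ P : n.Partition,
        (2 : ℚ[X]) ^ Multiset.card P.parts *
          ((∏ b ∈ P.parts.toFinset, ((P.parts.count b).factorial : ℚ))⁻¹ •
            ∏ i ∈ Finset.range (Multiset.card P.parts), ((X : ℚ[X]) - (i : ℚ[X])))
      = ∑ i ∈ Finset.Icc 1 n,
          (2 : ℚ[X]) ^ i * ((n - 1).choose (i - 1) : ℚ[X]) *
            ((i.factorial : ℚ)⁻¹ • ∏ j ∈ Finset.range i, ((X : ℚ[X]) - (j : ℚ[X]))) := by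
  set F : ℕ → ℚ[X] := fun k => ∏ j ∈ Finset.range k, ((X : ℚ[X]) - (j : ℚ[X])) with hF
  set g : ℕ → ℚ[X] := fun k => (2 : ℚ[X]) ^ k * ((k.factorial : ℚ)⁻¹ • F k) with hg
  -- Step 1: each partition term equals the sum over its composition fiber
  have step1 : ∀ P : n.Partition,
      (2 : ℚ[X]) ^ Multiset.card P.parts *
          ((∏ b ∈ P.parts.toFinset, ((P.parts.count b).factorial : ℚ))⁻¹ •
            F (Multiset.card P.parts))
        = ∑ c ∈ Finset.univ.filter
            (fun c : Composition n => Nat.Partition.ofComposition n c = P), g c.length := by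
    intro P
    have hfilter : (Finset.univ.filter
        (fun c : Composition n => Nat.Partition.ofComposition n c = P))
        = (Finset.univ.filter
            (fun c : Composition n => (↑c.blocks : Multiset ℕ) = P.parts)) := by
      apply Finset.filter_congr
      intro c _
      constructor
      · intro h; rw [← h]; rfl
      · intro h; exact Nat.Partition.ext h
    rw [hfilter]
    have hcount := fiber_card P.parts (fun a ha => P.parts_pos ha) n P.parts_sum
    have hlen : ∀ c ∈ Finset.univ.filter
        (fun c : Composition n => (↑c.blocks : Multiset ℕ) = P.parts),
        g c.length = g (Multiset.card P.parts) := by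
      intro c hc
      simp only [Finset.mem_filter, Finset.mem_univ, true_and] at hc
      congr 1
      rw [← hc]
      rfl
    rw [Finset.sum_congr rfl hlen, Finset.sum_const]
    set m := (Finset.univ.filter
        (fun c : Composition n => (↑c.blocks : Multiset ℕ) = P.parts)).card with hm
    have hprodpos : (∏ b ∈ P.parts.toFinset, ((P.parts.count b).factorial : ℚ)) ≠ 0 := by
      apply Finset.prod_ne_zero_iff.mpr
      intro b _
      exact_mod_cast (Nat.factorial_pos _).ne'
    have hfact : ((Multiset.card P.parts).factorial : ℚ) ≠ 0 := by
      exact_mod_cast (Nat.factorial_pos _).ne'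
    have hQ : (m : ℚ) * ∏ b ∈ P.parts.toFinset, ((P.parts.count b).factorial : ℚ)
        = ((Multiset.card P.parts).factorial : ℚ) := by
      exact_mod_cast congrArg (Nat.cast : ℕ → ℚ) hcount
    have hinv : (∏ b ∈ P.parts.toFinset, ((P.parts.count b).factorial : ℚ))⁻¹
        = (m : ℚ) * ((Multiset.card P.parts).factorial : ℚ)⁻¹ := by
      field_simp
      linarith [hQ]
    rw [hinv, mul_smul, smul_comm ((m : ℚ)) _, ← Nat.cast_smul_eq_nsmul ℚ m, smul_comm]
    rw [hg]
    simp only [mul_smul_comm]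
  calc ∑ P : n.Partition,
        (2 : ℚ[X]) ^ Multiset.card P.parts *
          ((∏ b ∈ P.parts.toFinset, ((P.parts.count b).factorial : ℚ))⁻¹ •
            F (Multiset.card P.parts))
      = ∑ P : n.Partition, ∑ c ∈ Finset.univ.filter
            (fun c : Composition n => Nat.Partition.ofComposition n c = P), g c.length := by
        exact Finset.sum_congr rfl (fun P _ => step1 P)
    _ = ∑ c : Composition n, g c.length := by
        exact Finset.sum_fiberwise_of_maps_to (fun c _ => Finset.mem_univ _) _
    _ = ∑ i ∈ Finset.Icc 1 n, ∑ c ∈ Finset.univ.filter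
            (fun c : Composition n => c.length = i), g c.length := by
        refine (Finset.sum_fiberwise_of_maps_to ?_ _).symm
        intro c _
        rw [Finset.mem_Icc]
        exact ⟨c.length_pos_of_pos hn, c.length_le⟩
    _ = ∑ i ∈ Finset.Icc 1 n,
          (2 : ℚ[X]) ^ i * ((n - 1).choose (i - 1) : ℚ[X]) *
            ((i.factorial : ℚ)⁻¹ • F i) := by
        refine Finset.sum_congr rfl ?_
        intro i hi
        rw [Finset.mem_Icc] at hi
        have hsum : ∑ c ∈ Finset.univ.filter
            (fun c : Composition n => c.length = i), g c.length
            = ((n - 1).choose (i - 1)) • g i := by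
          rw [← length_fiber_card n i hn hi.1, ← Finset.sum_const]
          refine Finset.sum_congr rfl ?_
          intro c hc
          simp only [Finset.mem_filter] at hc
          rw [hc.2]
        rw [hsum, hg]
        simp only [nsmul_eq_mul]
        ring
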